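/- The function ĥ(u) = (1/(u + k₁)) · log((1 + I)/(1 + I·exp(−(u + k₁)))) is strictly positive and strictly decreasing on [0, ∞), and ĥ(u) → 0 as u → ∞. -/

import Mathlib

open Real Filter

/-- The nondimensional light-dependent growth function
`ĥ(u) = (1/(u + k₁)) · log((1 + I)/(1 + I·exp(−(u + k₁))))`. -/
noncomputable def hhat (k₁ I u : ℝ) : ℝ :=
  (1 / (u + k₁)) * Real.log ((1 + I) / (1 + I * Real.exp (-(u + k₁))))

section aux

variable {I : ℝ}

lemma denom_pos (hI : 0 < I) (s : ℝ) : 0 < 1 + I * Real.exp (-s) := by positivity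

/-- auxiliary function `g s = log((1+I)/(1+I e^{-s}))`. -/
noncomputable def gfun (I s : ℝ) : ℝ := Real.log ((1 + I) / (1 + I * Real.exp (-s)))

lemma gfun_eq (hI : 0 < I) (s : ℝ) :
    gfun I s = Real.log (1 + I) - Real.log (1 + I * Real.exp (-s)) := by
  rw [gfun, Real.log_div (by positivity) (ne_of_gt (denom_pos hI s))]

lemma hasDerivAt_gfun (hI : 0 < I) (s : ℝ) :
    HasDerivAt (gfun I) (I / (Real.exp s + I)) s := by
  have h1 : HasDerivAt (fun s : ℝ => 1 + I * Real.exp (-s)) (-(I * Real.exp (-s))) s := by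
    have := ((Real.hasDerivAt_exp (-s)).comp s (hasDerivAt_neg s)).const_mul I
    simpa [mul_comm] using (this.const_add 1)
  have h2 : HasDerivAt (fun s => Real.log (1 + I * Real.exp (-s)))
      (-(I * Real.exp (-s)) / (1 + I * Real.exp (-s))) s :=
    h1.log (ne_of_gt (denom_pos hI s))
  have h3 : HasDerivAt (fun s => Real.log (1 + I) - Real.log (1 + I * Real.exp (-s)))
      (-(-(I * Real.exp (-s)) / (1 + I * Real.exp (-s)))) s := h2.const_sub _
  have heq : -(-(I * Real.exp (-s)) / (1 + I * Real.exp (-s))) = I / (Real.exp s + I) := by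
    rw [neg_div, neg_neg]
    rw [div_eq_div_iff (ne_of_gt (denom_pos hI s)) (by positivity)]
    have : Real.exp (-s) * Real.exp s = 1 := by
      rw [← Real.exp_add]; simp
    ring_nf
    nlinarith [this]
  rw [← heq]
  exact h3.congr_deriv rfl |>.congr_of_eventuallyEq (by
    filter_upwards with x using (gfun_eq hI x))

lemma gfun_strictConcave (hI : 0 < I) : StrictConcaveOn ℝ Set.univ (gfun I) := by
  have hd : ∀ s, HasDerivAt (gfun I) (I / (Real.exp s + I)) s := hasDerivAt_gfun hI
  have hderiv : deriv (gfun I) = fun s => I / (Real.exp s + I) := by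
    ext s; exact (hd s).deriv
  apply StrictAnti.strictConcaveOn_univ_of_deriv
  · exact continuous_iff_continuousAt.mpr fun s => (hd s).continuousAt
  · rw [hderiv]
    intro a b hab
    apply div_lt_div_of_pos_left hI (by positivity)
    linarith [Real.exp_lt_exp.mpr hab]

end aux

/-- `ĥ` is strictly positive and strictly decreasing on `[0, ∞)`, and `ĥ(u) → 0` as `u → ∞`. -/
theorem stmt_0 (k₁ I : ℝ) (hk₁ : 0 < k₁) (hI : 0 < I) :
    (∀ u ∈ Set.Ici (0 : ℝ), 0 < hhat k₁ I u) ∧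
    StrictAntiOn (hhat k₁ I) (Set.Ici (0 : ℝ)) ∧
    Filter.Tendsto (hhat k₁ I) Filter.atTop (nhds 0) := by
  have hhat_eq : ∀ u, hhat k₁ I u = (1 / (u + k₁)) * gfun I (u + k₁) := fun u => rfl
  have hg0 : gfun I 0 = 0 := by
    rw [gfun, neg_zero, Real.exp_zero, mul_one, div_self (by positivity), Real.log_one]
  have hgpos : ∀ s : ℝ, 0 < s → 0 < gfun I s := by
    intro s hs
    apply Real.log_pos
    rw [lt_div_iff₀ (denom_pos hI s)]
    have : Real.exp (-s) < 1 := Real.exp_lt_one_iff.mpr (by linarith)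
    nlinarith
  have hgle : ∀ s : ℝ, 0 ≤ s → gfun I s ≤ Real.log (1 + I) := by
    intro s hs
    apply Real.log_le_log (by positivity)
    apply div_le_self (by positivity)
    nlinarith [Real.exp_pos (-s)]
  refine ⟨?_, ?_, ?_⟩
  · intro u hu
    rw [hhat_eq]
    have hs : 0 < u + k₁ := by simp at hu; linarith
    exact mul_pos (by positivity) (hgpos _ hs)
  · intro a ha b hb hab
    simp only [Set.mem_Ici] at ha hb
    set s₁ := a + k₁ with hs1
    set s₂ := b + k₁ with hs2
    have h1 : 0 < s₁ := by positivity
    have h2 : s₁ < s₂ := by simp [hs1, hs2]; linarith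
    have hconc := (gfun_strictConcave hI).2 (Set.mem_univ s₂) (Set.mem_univ (0:ℝ))
      (by intro h; rw [h] at h2; linarith)
      (show (0:ℝ) < s₁ / s₂ by positivity)
      (show (0:ℝ) < 1 - s₁ / s₂ by
        have : s₁ / s₂ < 1 := (div_lt_one (by linarith)).mpr h2
        linarith) (by ring)
    have hsmul : (s₁ / s₂) • s₂ + (1 - s₁ / s₂) • (0:ℝ) = s₁ := by
      rw [smul_eq_mul, smul_eq_mul, mul_zero, add_zero, div_mul_cancel₀ _ (ne_of_gt (by linarith))]
    rw [hsmul, hg0, smul_eq_mul, smul_eq_mul, mul_zero, add_zero] at hconc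
    rw [hhat_eq, hhat_eq]
    rw [div_mul_eq_mul_div, div_lt_iff₀ (by linarith)] at hconc
    rw [one_div, one_div, ← hs1, ← hs2, inv_mul_eq_div, inv_mul_eq_div,
      div_lt_div_iff₀ (by linarith) h1]
    nlinarith
  · have hlim : Filter.Tendsto (fun u : ℝ => Real.log (1 + I) * (1 / (u + k₁)))
        Filter.atTop (nhds 0) := by
      have h1 : Filter.Tendsto (fun u : ℝ => u + k₁) Filter.atTop Filter.atTop :=
        tendsto_atTop_add_const_right _ k₁ tendsto_id
      have h2 := h1.inv_tendsto_atTop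
      simpa [one_div] using (h2.const_mul (Real.log (1 + I)))
    apply tendsto_of_tendsto_of_tendsto_of_le_of_le' tendsto_const_nhds hlim
    · filter_upwards [Filter.eventually_ge_atTop (0:ℝ)] with u hu
      rw [hhat_eq]
      have hs : 0 < u + k₁ := by linarith
      exact le_of_lt (mul_pos (by positivity) (hgpos _ hs))
    · filter_upwards [Filter.eventually_ge_atTop (0:ℝ)] with u hu
      rw [hhat_eq]
      have hs : 0 < u + k₁ := by linarith
      rw [mul_comm]
      exact mul_le_mul_of_nonneg_right (hgle _ (le_of_lt hs)) (by positivity)
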